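/- For n ≥ 1, the map D_∞ × (ℝ × S^{2n}) → ℝ × S^{2n} given by (m, a) · (t, x) = (m + (−1)^a t, (−1)^a x), where D_∞ = ℤ ⋊ ℤ/2 is the infinite dihedral group, defines a group action of D_∞ on ℝ × S^{2n} which is free and properly discontinuous. -/

import Mathlib

/-- The automorphism of `ℤ` (written multiplicatively) given by negation. -/
def negAutZ : MulAut (Multiplicative ℤ) := MulEquiv.inv (Multiplicative ℤ)

lemma negAutZ_sq : negAutZ ^ 2 = 1 := by
  ext z
  simp [negAutZ, pow_succ]

/-- The action of `ℤ/2` on `ℤ` in which the generator acts by negation. -/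
def dihedralTwist : Multiplicative (ZMod 2) →* MulAut (Multiplicative ℤ) where
  toFun a := negAutZ ^ (Multiplicative.toAdd a).val
  map_one' := by
    show negAutZ ^ (Multiplicative.toAdd (1 : Multiplicative (ZMod 2))).val = 1
    simp
  map_mul' x y := by
    show negAutZ ^ (Multiplicative.toAdd x + Multiplicative.toAdd y).val = _
    rw [ZMod.val_add, ← pow_eq_pow_mod _ negAutZ_sq, pow_add]

/-- The infinite dihedral group, as the semidirect product `ℤ ⋊ ℤ/2` where the
generator of `ℤ/2` acts on `ℤ` by negation; its elements are pairs `(m, a)` with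
multiplication `(m, a)(m', a') = (m + (−1)^a m', a + a')`. -/
abbrev InfiniteDihedral : Type := Multiplicative ℤ ⋊[dihedralTwist] Multiplicative (ZMod 2)

/-- The `2n`-sphere, as the unit sphere in `ℝ^{2n+1}`. -/
abbrev EvenSphere (n : ℕ) := Metric.sphere (0 : EuclideanSpace ℝ (Fin (2 * n + 1))) 1

/-- The map `(m, a) • (t, x) = (m + (−1)^a t, (−1)^a x)` on `ℝ × S^{2n}`. -/
noncomputable def dihedralSmul (n : ℕ) (g : InfiniteDihedral)
    (p : ℝ × EvenSphere n) : ℝ × EvenSphere n :=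
  (((Multiplicative.toAdd g.left : ℤ) : ℝ) +
      ((-1 : ℝ) ^ (Multiplicative.toAdd g.right).val) * p.1,
    ⟨((-1 : ℝ) ^ (Multiplicative.toAdd g.right).val) •
        (p.2 : EuclideanSpace ℝ (Fin (2 * n + 1))), by
      have h := p.2.2
      simp only [mem_sphere_zero_iff_norm] at h ⊢
      rw [norm_smul, h, norm_pow, norm_neg, norm_one, one_pow, mul_one]⟩)

lemma val01' (a : Multiplicative (ZMod 2)) :
    (Multiplicative.toAdd a).val = 0 ∨ (Multiplicative.toAdd a).val = 1 := by
  have := ZMod.val_lt (Multiplicative.toAdd a); omega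

lemma toAdd_twist' (a : Multiplicative (ZMod 2)) (z : Multiplicative ℤ) :
    (Multiplicative.toAdd (dihedralTwist a z) : ℤ) =
      (-1 : ℤ) ^ (Multiplicative.toAdd a).val * Multiplicative.toAdd z := by
  rcases val01' a with h | h <;> simp [dihedralTwist, h, negAutZ]

lemma neg_one_pow_val_add' (a b : ZMod 2) :
    ((-1 : ℝ)) ^ (a + b).val = (-1 : ℝ) ^ a.val * (-1 : ℝ) ^ b.val := by
  rw [ZMod.val_add, ← pow_eq_pow_mod _ (by norm_num : ((-1:ℝ))^2 = 1), pow_add]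

theorem stmt_9 (n : ℕ) (hn : 1 ≤ n) :
    (∀ p : ℝ × EvenSphere n, dihedralSmul n 1 p = p) ∧
    (∀ (a b : InfiniteDihedral) (p : ℝ × EvenSphere n),
      dihedralSmul n (a * b) p = dihedralSmul n a (dihedralSmul n b p)) ∧
    (∀ (g : InfiniteDihedral) (p : ℝ × EvenSphere n), dihedralSmul n g p = p → g = 1) ∧
    @ProperlyDiscontinuousSMul InfiniteDihedral (ℝ × EvenSphere n) _ ⟨dihedralSmul n⟩ := by
  refine ⟨?_, ?_, ?_, ?_⟩
  · intro p
    refine Prod.ext ?_ (Subtype.ext ?_) <;> simp [dihedralSmul]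
  · intro a b p
    refine Prod.ext ?_ (Subtype.ext ?_)
    · simp only [dihedralSmul, SemidirectProduct.mul_left, SemidirectProduct.mul_right,
        toAdd_mul, toAdd_twist', neg_one_pow_val_add']
      push_cast
      ring
    · simp only [dihedralSmul, SemidirectProduct.mul_right, toAdd_mul,
        neg_one_pow_val_add', smul_smul]
  · intro g p h
    have h1 := congrArg Prod.fst h
    have h2 := congrArg (fun q : ℝ × EvenSphere n =>
      (q.2 : EuclideanSpace ℝ (Fin (2 * n + 1)))) h
    simp only [dihedralSmul] at h1 h2
    rcases val01' g.right with ha | ha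
    · rw [ha] at h1
      simp only [pow_zero, one_mul, add_eq_right] at h1
      have hl : Multiplicative.toAdd g.left = 0 := by exact_mod_cast h1
      have hr : Multiplicative.toAdd g.right = 0 := (ZMod.val_eq_zero _).mp ha
      rcases g with ⟨gl, gr⟩
      have : gl = 1 := by simpa using hl
      have : gr = 1 := by simpa using hr
      subst this
      simp_all
    · rw [ha] at h2
      simp only [pow_one, neg_one_smul] at h2
      have hx : ((p.2 : EuclideanSpace ℝ (Fin (2 * n + 1)))) = 0 := by
        have h3 : (2:ℝ) • (p.2 : EuclideanSpace ℝ (Fin (2 * n + 1))) = 0 := by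
          rw [two_smul]; nth_rewrite 1 [← h2]; rw [neg_add_cancel]
        simpa using h3
      have := p.2.2
      rw [mem_sphere_zero_iff_norm, hx] at this
      simp at this
  · letI : SMul InfiniteDihedral (ℝ × EvenSphere n) := ⟨dihedralSmul n⟩
    constructor
    intro K L hK hL
    obtain ⟨R₁, hR₁⟩ := isBounded_iff_forall_norm_le.mp (hK.image continuous_fst).isBounded
    obtain ⟨R₂, hR₂⟩ := isBounded_iff_forall_norm_le.mp (hL.image continuous_fst).isBounded
    set N : ℤ := ⌈R₁ + R₂⌉
    have hfin : (((fun g : InfiniteDihedral => (Multiplicative.toAdd g.left, g.right)) ⁻¹'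
        (Set.Icc (-N) N ×ˢ Set.univ)) : Set InfiniteDihedral).Finite := by
      refine Set.Finite.preimage ?_ ((Set.finite_Icc _ _).prod Set.finite_univ)
      intro g _ g' _ hgg
      rcases g with ⟨gl, gr⟩; rcases g' with ⟨gl', gr'⟩
      simp only [Prod.mk.injEq] at hgg
      exact SemidirectProduct.ext (by simpa using hgg.1) hgg.2
    refine hfin.subset ?_
    intro g hg
    rw [Set.mem_setOf_eq] at hg
    obtain ⟨q, ⟨p, hpK, rfl⟩, hqL⟩ := hg
    have hq : (g • p : ℝ × EvenSphere n) = dihedralSmul n g p := rfl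
    set m : ℤ := Multiplicative.toAdd g.left
    have ht : |p.1| ≤ R₁ := by
      have := hR₁ p.1 ⟨p, hpK, rfl⟩
      simpa using this
    have hL2 : |(m : ℝ) + (-1:ℝ) ^ (Multiplicative.toAdd g.right).val * p.1| ≤ R₂ := by
      have := hR₂ (dihedralSmul n g p).1 ⟨dihedralSmul n g p, hqL, rfl⟩
      simpa [dihedralSmul] using this
    have hm : |(m : ℝ)| ≤ R₁ + R₂ := by
      rcases val01' g.right with ha | ha <;> rw [ha] at hL2 <;>
          simp only [pow_zero, pow_one, one_mul, neg_one_mul] at hL2 <;>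
        obtain ⟨h2a, h2b⟩ := abs_le.mp hL2 <;>
        obtain ⟨h1a, h1b⟩ := abs_le.mp ht <;>
        exact abs_le.mpr ⟨by linarith, by linarith⟩
    have hmN : |m| ≤ N := by
      have h1 : (|m| : ℝ) ≤ (N : ℝ) := by
        push_cast
        calc (|(m:ℝ)|) ≤ R₁ + R₂ := hm
        _ ≤ N := Int.le_ceil _
      exact_mod_cast h1
    constructor
    · simpa using abs_le.mp hmN
    · trivial
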